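/- Let H be a finite directed graph in which any two vertices in the same connected component are joined by a unique simple directed path. Suppose i → j is an edge of H and let T_j be the unique j-tree and T_i the unique i-tree (which exist by uniqueness of simple paths). Then T_i is obtained from T_j by deleting the edge i → j and adding the edge j → ℓ, where j → ℓ is the first edge of the unique simple directed path from j to i. -/

import Mathlib

/-- `l` is a simple directed path from `i` to `j` in the digraph `E`. -/
def IsSimplePath {V : Type*} (E : V → V → Prop) (i j : V) (l : List V) : Prop :=
  l.Chain' E ∧ l.Nodup ∧ l.head? = some i ∧ l.getLast? = some j

/-- Two vertices lie in the same connected component of the underlying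
undirected graph of the digraph `E`. -/
def SameComponent {V : Type*} (E : V → V → Prop) : V → V → Prop :=
  Relation.ReflTransGen (fun a b => E a b ∨ E b a)

/-- `T` is a spanning `i`-tree of the connected component of `i`. -/
def IsITree {V : Type*} (E : V → V → Prop) (i : V) (T : V → V → Prop) : Prop :=
  (∀ a b, T a b → E a b) ∧
  (∀ a b, T a b → SameComponent E i a ∧ SameComponent E i b) ∧
  (∀ b, ¬ T i b) ∧
  (∀ a, SameComponent E i a → a ≠ i → ∃! b, T a b) ∧
  (∀ a, SameComponent E i a → Relation.ReflTransGen T a i)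

section Aux

variable {V : Type*} {E : V → V → Prop}

lemma sp_comp {x y : V} {l : List V} (h : IsSimplePath E x y l) : SameComponent E x y := by
  obtain ⟨h1, -, h3, h4⟩ := h
  cases l with
  | nil => simp at h3
  | cons a t =>
    have ha : a = x := by simpa using h3
    subst ha
    have hch : List.Chain (fun p q => E p q ∨ E q p) a t :=
      List.Chain.imp (fun p q h => Or.inl h) h1
    refine List.relationReflTransGen_of_exists_isChain_cons t (List.IsChain.imp (fun p q h => Or.inl h) h1) ?_
    have hne : (a :: t) ≠ ([] : List V) := by simp
    rw [List.getLast?_eq_getLast_of_ne_nil hne] at h4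
    exact Option.some_injective _ h4

lemma samecomp_symm {x y : V} (h : SameComponent E x y) : SameComponent E y x :=
  by haveI : Std.Symm (fun a b : V => E a b ∨ E b a) := ⟨fun _ _ h => h.symm⟩
     exact (Relation.ReflTransGen.stdSymm (r := fun a b : V => E a b ∨ E b a)).symm _ _ h

lemma sp_unique (hpath : ∀ i j, SameComponent E i j → ∃! l : List V, IsSimplePath E i j l)
    {x y : V} {l m : List V} (hl : IsSimplePath E x y l) (hm : IsSimplePath E x y m) : l = m := by
  obtain ⟨n, -, hu⟩ := hpath x y (sp_comp hl)
  rw [hu l hl, hu m hm]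

lemma sp_ne {x y a b : V} {s : List V} (h : IsSimplePath E x y (a :: b :: s)) : x ≠ y := by
  obtain ⟨-, h2, h3, h4⟩ := h
  have hax : a = x := by simpa using h3
  rw [List.getLast?_cons_cons] at h4
  have hy : y ∈ b :: s := List.mem_of_getLast? h4
  subst hax
  rintro rfl
  exact (List.nodup_cons.1 h2).1 hy

lemma sp_suffix {x y z : V} {u v : List V} (h : IsSimplePath E x y (u ++ z :: v)) :
    IsSimplePath E z y (z :: v) := by
  obtain ⟨h1, h2, -, h4⟩ := h
  have hsuf : (z :: v) <:+ (u ++ z :: v) := List.suffix_append u (z :: v)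
  refine ⟨h1.suffix hsuf, hsuf.sublist.nodup h2, rfl, ?_⟩
  rwa [List.getLast?_append_cons] at h4

lemma sp_prefix {x y z : V} {u v : List V} (hu : u ≠ []) (h : IsSimplePath E x y (u ++ z :: v)) :
    IsSimplePath E x z (u ++ [z]) := by
  obtain ⟨h1, h2, h3, -⟩ := h
  have hpre : (u ++ [z]) <+: (u ++ z :: v) := ⟨v, by simp⟩
  refine ⟨h1.prefix hpre, hpre.sublist.nodup h2, ?_, List.getLast?_concat (l := u)⟩
  cases u with
  | nil => exact absurd rfl hu
  | cons a u' =>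
    have : a = x := by simpa using h3
    simp [this]

lemma exists_nodup_chain {T : V → V → Prop} {a c : V} (h : Relation.ReflTransGen T a c) :
    ∃ l : List V, l.Chain' T ∧ l.Nodup ∧ l.head? = some a ∧ l.getLast? = some c := by
  induction h using Relation.ReflTransGen.head_induction_on with
  | refl => exact ⟨[c], List.isChain_singleton c, by simp, rfl, rfl⟩
  | head hab _ ih =>
    rename_i a' b' _
    obtain ⟨l, hc, hn, hh, hl⟩ := ih
    by_cases hm : a' ∈ l
    · obtain ⟨u, v, rfl⟩ := List.append_of_mem hm
      have hsuf : (a' :: v) <:+ (u ++ a' :: v) := List.suffix_append u (a' :: v)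
      refine ⟨a' :: v, hc.suffix hsuf, hsuf.sublist.nodup hn, rfl, ?_⟩
      rwa [List.getLast?_append_cons] at hl
    · cases l with
      | nil => simp at hh
      | cons b'' t =>
        have hb : b'' = b' := by simpa using hh
        subst hb
        refine ⟨a' :: b'' :: t, List.isChain_cons_cons.2 ⟨hab, hc⟩, ?_, rfl, by
          rw [List.getLast?_cons_cons]; exact hl⟩
        exact List.nodup_cons.2 ⟨hm, hn⟩

lemma itree_out {i : V} {T : V → V → Prop} (hT : IsITree E i T) {a b : V} (h : T a b) :
    ∃ s, IsSimplePath E a i (a :: b :: s) := by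
  obtain ⟨hTE, hcompo, hnoi, huniq, hreach⟩ := hT
  have hia : SameComponent E i a := (hcompo a b h).1
  have hai : a ≠ i := by rintro rfl; exact hnoi b h
  obtain ⟨l, hc, hn, hh, hl⟩ := exists_nodup_chain (hreach a hia)
  cases l with
  | nil => simp at hh
  | cons a' t =>
    have ha' : a' = a := by simpa using hh
    subst ha'
    cases t with
    | nil => exact absurd (by simpa using hl) hai
    | cons b' s =>
      have hTab' : T a' b' := (List.isChain_cons_cons.1 hc).1
      obtain ⟨c, -, hc2⟩ := huniq a' hia hai
      have hb : b' = b := by rw [hc2 b' hTab', hc2 b h]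
      subst hb
      exact ⟨s, hc.imp hTE, hn, rfl, hl⟩

lemma itree_iff (hpath : ∀ i j, SameComponent E i j → ∃! l : List V, IsSimplePath E i j l)
    {i : V} {T : V → V → Prop} (hT : IsITree E i T) (a b : V) :
    T a b ↔ ∃ s, IsSimplePath E a i (a :: b :: s) := by
  constructor
  · exact itree_out hT
  · rintro ⟨s, hsp⟩
    have hai : a ≠ i := sp_ne hsp
    have hia : SameComponent E i a := samecomp_symm (sp_comp hsp)
    obtain ⟨c, hc, -⟩ := hT.2.2.2.1 a hia hai
    obtain ⟨s', hsp'⟩ := itree_out hT hc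
    have heq := sp_unique hpath hsp hsp'
    obtain ⟨hb, -⟩ : b = c ∧ s = s' := by simpa using heq
    rwa [hb]

lemma sp_cut {a b y z : V} {s : List V} (hz : z ∈ a :: b :: s) (haz : a ≠ z)
    (hs : IsSimplePath E a y (a :: b :: s)) :
    ∃ s', IsSimplePath E a z (a :: b :: s') := by
  obtain ⟨u, v, huv⟩ := List.append_of_mem hz
  have hu : u ≠ [] := by
    rintro rfl
    simp only [List.nil_append, List.cons.injEq] at huv
    exact haz huv.1
  have hpre := sp_prefix hu (huv ▸ hs)
  cases u with
  | nil => exact absurd rfl hu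
  | cons a' u' =>
    have ha' : a' = a := by
      have : (a :: b :: s).head? = some a' := by rw [huv]; rfl
      simpa using this.symm
    subst ha'
    cases u' with
    | nil =>
      have hb : b = z := by
        simp only [List.cons_append, List.nil_append, List.cons.injEq] at huv
        exact huv.2.1
      subst hb
      exact ⟨[], hpre⟩
    | cons b' u'' =>
      have hb : b' = b := by
        simp only [List.cons_append, List.cons.injEq] at huv
        exact huv.2.1.symm
      subst hb
      exact ⟨u'' ++ [z], by simpa using hpre⟩

end Aux

/-- under the unique-simple-path hypothesis, if `i → j` is an
edge, `T_j` is the (unique) `j`-tree and `T_i` the (unique) `i`-tree, and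
`j → ℓ` is the first edge of the unique simple directed path from `j` to `i`,
then `T_i` is obtained from `T_j` by deleting the edge `i → j` and adding the
edge `j → ℓ`. -/
theorem stmt1 {V : Type*} [Fintype V] (E : V → V → Prop)
    (hpath : ∀ i j, SameComponent E i j → ∃! l : List V, IsSimplePath E i j l)
    (i j ℓ : V) (hij : E i j)
    (Ti Tj : V → V → Prop) (hTi : IsITree E i Ti) (hTj : IsITree E j Tj)
    (rest : List V) (hp : IsSimplePath E j i (j :: ℓ :: rest)) :
    ∀ a b, Ti a b ↔ ((Tj a b ∧ ¬(a = i ∧ b = j)) ∨ (a = j ∧ b = ℓ)) := by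
  have hEjl : E j ℓ := (List.isChain_cons_cons.1 hp.1).1
  have hji' : j ≠ i := sp_ne hp
  have hij' : i ≠ j := hji'.symm
  have hspij : IsSimplePath E i j [i, j] := by
    refine ⟨List.isChain_cons_cons.2 ⟨hij, List.isChain_singleton j⟩, ?_, rfl, rfl⟩
    simp [hij']
  intro a b
  rw [itree_iff hpath hTi a b, itree_iff hpath hTj a b]
  by_cases haj : a = j
  · subst haj
    constructor
    · rintro ⟨s, hs⟩
      have heq := sp_unique hpath hs hp
      obtain ⟨hb, -⟩ : b = ℓ ∧ s = rest := by simpa using heq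
      exact Or.inr ⟨rfl, hb⟩
    · rintro (⟨⟨s, hs⟩, -⟩ | ⟨-, rfl⟩)
      · exact absurd rfl (sp_ne hs)
      · exact ⟨rest, hp⟩
  by_cases hai : a = i
  · subst hai
    constructor
    · rintro ⟨s, hs⟩
      exact absurd rfl (sp_ne hs)
    · rintro (⟨⟨s, hs⟩, hnot⟩ | ⟨h, -⟩)
      · have heq := sp_unique hpath hs hspij
        obtain ⟨hb, -⟩ : b = j ∧ s = [] := by simpa using heq
        exact absurd ⟨rfl, hb⟩ hnot
      · exact absurd h hij'
  · constructor
    · rintro ⟨s, hs⟩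
      refine Or.inl ⟨?_, fun h => hai h.1⟩
      by_cases hjm : j ∈ a :: b :: s
      · exact sp_cut hjm haj hs
      · refine ⟨s ++ [j], ?_, ?_, rfl, ?_⟩
        · have : a :: b :: (s ++ [j]) = (a :: b :: s) ++ [j] := by simp
          rw [this]
          refine hs.1.append (List.isChain_singleton j) ?_
          intro x hx y hy
          have hxi : x = i := by
            have := hs.2.2.2
            rw [this] at hx
            exact (by simpa using hx : i = x).symm
          have hyj : y = j := (by simpa using hy : j = y).symm
          rw [hxi, hyj]; exact hij
        · have : a :: b :: (s ++ [j]) = (a :: b :: s) ++ [j] := by simp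
          rw [this, List.nodup_append]
          refine ⟨hs.2.1, List.nodup_singleton j, ?_⟩
          intro x hx y hy hxy
          have : x = j := by simpa [hxy] using hy
          exact hjm (this ▸ hx)
        · have : a :: b :: (s ++ [j]) = (a :: b :: s) ++ [j] := by simp
          rw [this, List.getLast?_concat]
    · rintro (⟨⟨s, hs⟩, -⟩ | ⟨h, -⟩)
      · by_cases him : i ∈ a :: b :: s
        · exact sp_cut him hai hs
        · have hjnot : j ∉ ℓ :: rest := (List.nodup_cons.1 hp.2.1).1
          have hdisj : ∀ x ∈ a :: b :: s, x ∉ ℓ :: rest := by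
            intro x hx hx'
            obtain ⟨u, v, huv⟩ := List.append_of_mem hx
            obtain ⟨u', v', huv'⟩ := List.append_of_mem hx'
            have S1 : IsSimplePath E x j (x :: v) := sp_suffix (huv ▸ hs)
            have S2 : IsSimplePath E x i (x :: v') := by
              have : j :: ℓ :: rest = (j :: u') ++ x :: v' := by rw [huv']; rfl
              exact sp_suffix (this ▸ hp)
            have hjv' : j ∉ x :: v' := by
              intro hjv
              exact hjnot (huv' ▸ (List.suffix_append u' (x :: v')).subset hjv)
            have S3 : IsSimplePath E x j ((x :: v') ++ [j]) := by
              refine ⟨?_, ?_, by simp, List.getLast?_concat⟩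
              · refine S2.1.append (List.isChain_singleton j) ?_
                intro p hp1 q hq1
                have hpi : p = i := by
                  have := S2.2.2.2
                  rw [this] at hp1
                  exact (by simpa using hp1 : i = p).symm
                have hqj : q = j := (by simpa using hq1 : j = q).symm
                rw [hpi, hqj]; exact hij
              · rw [List.nodup_append]
                refine ⟨S2.2.1, List.nodup_singleton j, ?_⟩
                intro p hp1 q hq2 hpq
                have : p = j := by simpa [hpq] using hq2
                exact hjv' (this ▸ hp1)
            have heq := sp_unique hpath S1 S3
            have hiin : i ∈ x :: v := by
              rw [heq]
              have : i ∈ x :: v' := List.mem_of_getLast? S2.2.2.2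
              exact List.mem_append_left _ this
            have : i ∈ a :: b :: s := huv ▸ (List.suffix_append u (x :: v)).subset hiin
            exact him this
          refine ⟨s ++ ℓ :: rest, ?_, ?_, rfl, ?_⟩
          · have heq : a :: b :: (s ++ ℓ :: rest) = (a :: b :: s) ++ (ℓ :: rest) := by simp
            rw [heq]
            refine hs.1.append hp.1.tail ?_
            intro x hx y hy
            have hxj : x = j := by
              have := hs.2.2.2
              rw [this] at hx
              exact (by simpa using hx : j = x).symm
            have hyl : y = ℓ := (by simpa using hy : ℓ = y).symm
            rw [hxj, hyl]; exact hEjl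
          · have heq : a :: b :: (s ++ ℓ :: rest) = (a :: b :: s) ++ (ℓ :: rest) := by simp
            rw [heq, List.nodup_append]
            exact ⟨hs.2.1, (List.nodup_cons.1 hp.2.1).2, fun x hx y hy hxy => hdisj x hx (hxy ▸ hy)⟩
          · have heq : a :: b :: (s ++ ℓ :: rest) = (a :: b :: s) ++ (ℓ :: rest) := by simp
            rw [heq, List.getLast?_append_cons]
            have := hp.2.2.2
            rwa [List.getLast?_cons_cons] at this
      · exact absurd h haj
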